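/- Let (X, f_{1,∞}) be an m-periodic non-autonomous system on a compact metric space. If (X, f_{1,∞}) is sensitive, then the autonomous system (X, g), where g = f_m ∘ ⋯ ∘ f_1, is sensitive. -/
import Mathlib


open Set Filter MeasureTheory TopologicalSpace

/-- `iterN f n = f_{n-1} ∘ ⋯ ∘ f_0`, the `n`-th iterate of the non-autonomous system. -/
def iterN {X : Type*} (f : ℕ → X → X) : ℕ → X → X
  | 0 => id
  | n + 1 => f n ∘ iterN f n

/-- Topological transitivity of a non-autonomous system. -/
def NATransitive {X : Type*} [TopologicalSpace X] (f : ℕ → X → X) : Prop :=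
  ∀ U V : Set X, IsOpen U → IsOpen V → U.Nonempty → V.Nonempty →
    ∃ n : ℕ, 0 < n ∧ (iterN f n '' U ∩ V).Nonempty

/-- Weak mixing (order 2). -/
def NAWeaklyMixing {X : Type*} [TopologicalSpace X] (f : ℕ → X → X) : Prop :=
  ∀ U₁ U₂ V₁ V₂ : Set X, IsOpen U₁ → IsOpen U₂ → IsOpen V₁ → IsOpen V₂ →
    U₁.Nonempty → U₂.Nonempty → V₁.Nonempty → V₂.Nonempty →
    ∃ n : ℕ, 0 < n ∧ (iterN f n '' U₁ ∩ V₁).Nonempty ∧ (iterN f n '' U₂ ∩ V₂).Nonempty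

/-- Weak mixing of order `m`. -/
def NAWeaklyMixingOrder {X : Type*} [TopologicalSpace X] (f : ℕ → X → X) (m : ℕ) : Prop :=
  ∀ U V : Fin m → Set X, (∀ i, IsOpen (U i)) → (∀ i, IsOpen (V i)) →
    (∀ i, (U i).Nonempty) → (∀ i, (V i).Nonempty) →
    ∃ n : ℕ, 0 < n ∧ ∀ i, (iterN f n '' U i ∩ V i).Nonempty

/-- Banks's condition. -/
def NABanks {X : Type*} [TopologicalSpace X] (f : ℕ → X → X) : Prop :=
  ∀ U V W : Set X, IsOpen U → IsOpen V → IsOpen W →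
    U.Nonempty → V.Nonempty → W.Nonempty →
    ∃ n : ℕ, 0 < n ∧ (iterN f n '' U ∩ V).Nonempty ∧ (iterN f n '' U ∩ W).Nonempty

/-- Topological mixing. -/
def NAMixing {X : Type*} [TopologicalSpace X] (f : ℕ → X → X) : Prop :=
  ∀ U V : Set X, IsOpen U → IsOpen V → U.Nonempty → V.Nonempty →
    ∃ N : ℕ, ∀ n ≥ N, (iterN f n '' U ∩ V).Nonempty

/-- `blockC f s k = f_{s+k-1} ∘ ⋯ ∘ f_s`. -/
def blockC {X : Type*} (f : ℕ → X → X) (s k : ℕ) : X → X :=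
  iterN (fun i => f (s + i)) k

/-- The `k`-th iterate system `f_{1,∞}^{[k]}`. -/
def kthSys {X : Type*} (f : ℕ → X → X) (k : ℕ) : ℕ → X → X :=
  fun n => blockC f (n * k) k

/-- The induced non-autonomous system on Borel probability measures (pushforwards). -/
noncomputable def inducedM {X : Type*} [MeasurableSpace X] [TopologicalSpace X]
    [BorelSpace X] (f : ℕ → X → X) (hf : ∀ n, Continuous (f n)) :
    ℕ → ProbabilityMeasure X → ProbabilityMeasure X :=
  fun n μ => μ.map ((hf n).measurable.aemeasurable)

/-- The induced non-autonomous system on the hyperspace of non-empty compact subsets. -/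
def inducedK {X : Type*} [TopologicalSpace X] (f : ℕ → X → X) (hf : ∀ n, Continuous (f n)) :
    ℕ → NonemptyCompacts X → NonemptyCompacts X :=
  fun n K => ⟨⟨f n '' (K : Set X), K.isCompact.image (hf n)⟩, K.nonempty.image _⟩

/-- The set `N(U, δ)` of sensitivity times. -/
def NSet {X : Type*} [PseudoMetricSpace X] (f : ℕ → X → X) (U : Set X) (δ : ℝ) : Set ℕ :=
  {n | 0 < n ∧ ∃ x ∈ U, ∃ y ∈ U, δ < dist (iterN f n x) (iterN f n y)}

/-- Sensitive dependence on initial conditions. -/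
def NASensitive {X : Type*} [PseudoMetricSpace X] (f : ℕ → X → X) : Prop :=
  ∃ δ : ℝ, 0 < δ ∧ ∀ x : X, ∀ U : Set X, IsOpen U → x ∈ U →
    ∃ y ∈ U, ∃ n : ℕ, 0 < n ∧ δ < dist (iterN f n x) (iterN f n y)

/-- A thick subset of ℕ. -/
def ThickSet (S : Set ℕ) : Prop := ∀ p : ℕ, ∃ n : ℕ, ∀ j ≤ p, n + j ∈ S

/-- A syndetic subset of ℕ. -/
def SyndeticSet (S : Set ℕ) : Prop := ∃ a : ℕ, ∀ i : ℕ, ∃ j, i ≤ j ∧ j ≤ i + a ∧ j ∈ S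

/-- Upper density of a subset of ℕ. -/
noncomputable def upperDens (S : Set ℕ) : ℝ :=
  Filter.limsup (fun n : ℕ => (Nat.card ↥(S ∩ Set.Iio n) : ℝ) / n) Filter.atTop

/-- Periodic point of a non-autonomous system. -/
def NAPeriodicPt {X : Type*} (f : ℕ → X → X) (x : X) : Prop :=
  ∃ n : ℕ, 0 < n ∧ ∀ k : ℕ, 0 < k → iterN f (n * k) x = x

lemma iterN_continuous {X : Type*} [TopologicalSpace X] (f : ℕ → X → X)
    (hf : ∀ n, Continuous (f n)) : ∀ n, Continuous (iterN f n)
  | 0 => continuous_id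
  | n + 1 => (hf n).comp (iterN_continuous f hf n)

lemma iterN_add_per {X : Type*} (f : ℕ → X → X) (m : ℕ)
    (hper : ∀ n, f (n + m) = f n) :
    ∀ n, iterN f (n + m) = iterN f n ∘ iterN f m := by
  intro n
  induction n with
  | zero => simp [iterN]
  | succ n ih =>
    have h1 : n + 1 + m = (n + m) + 1 := by ring
    rw [h1]
    show f (n + m) ∘ iterN f (n + m) = (f n ∘ iterN f n) ∘ iterN f m
    rw [hper, ih]
    rfl

lemma iterN_mul_add {X : Type*} (f : ℕ → X → X) (m : ℕ)
    (hper : ∀ n, f (n + m) = f n) :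
    ∀ q r, iterN f (q * m + r) = iterN f r ∘ (iterN f m)^[q] := by
  intro q
  induction q with
  | zero => intro r; simp
  | succ q ih =>
    intro r
    have h1 : (q + 1) * m + r = (q * m + r) + m := by ring
    rw [h1, iterN_add_per f m hper, ih, Function.iterate_succ]
    rfl

/-- sensitivity of an `m`-periodic non-autonomous system on a compact
metric space implies sensitivity of the autonomous system `(X, g)`, `g = f_m ∘ ⋯ ∘ f_1`. -/
theorem periodic_sensitive_implies_autonomous_sensitive {X : Type*} [MetricSpace X]
    [CompactSpace X] (f : ℕ → X → X) (hf : ∀ n, Continuous (f n)) (m : ℕ) (hm : 0 < m)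
    (hper : ∀ n, f (n + m) = f n) (h : NASensitive f) :
    ∃ δ : ℝ, 0 < δ ∧ ∀ x : X, ∀ U : Set X, IsOpen U → x ∈ U →
      ∃ y ∈ U, ∃ n : ℕ, 0 < n ∧ δ < dist ((iterN f m)^[n] x) ((iterN f m)^[n] y) := by
  obtain ⟨δ, hδ, hsen⟩ := h
  -- uniform equicontinuity constants for each partial composition
  have H : ∀ r : ℕ, ∃ ε > 0, ∀ a b : X, dist a b < ε →
      dist (iterN f r a) (iterN f r b) < δ := by
    intro r
    have hc : UniformContinuous (iterN f r) :=
      CompactSpace.uniformContinuous_of_continuous (iterN_continuous f hf r)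
    exact Metric.uniformContinuous_iff.mp hc δ hδ
  choose ε hεpos hεd using H
  have hne : (Finset.range m).Nonempty := Finset.nonempty_range_iff.mpr hm.ne'
  set E : ℝ := (Finset.range m).inf' hne ε with hE
  have hEpos : 0 < E := by
    rw [hE, Finset.lt_inf'_iff]
    intro r _
    exact hεpos r
  have hEle : ∀ r < m, E ≤ ε r := fun r hr =>
    Finset.inf'_le _ (Finset.mem_range.mpr hr)
  refine ⟨E / 2, by linarith, ?_⟩
  intro x U hU hxU
  obtain ⟨y, hy, n, hn, hdist⟩ :=
    hsen x (U ∩ Metric.ball x E) (hU.inter Metric.isOpen_ball)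
      ⟨hxU, Metric.mem_ball_self hEpos⟩
  obtain ⟨hyU, hyB⟩ := hy
  set q := n / m with hq
  set r := n % m with hr
  have hrm : r < m := Nat.mod_lt _ hm
  have hnqr : n = q * m + r := (Nat.div_add_mod' n m).symm
  have hiter : iterN f n = iterN f r ∘ (iterN f m)^[q] := by
    rw [hnqr]; exact iterN_mul_add f m hper q r
  have hq0 : 0 < q := by
    by_contra hq0
    push_neg at hq0
    interval_cases q
    · have : dist (iterN f r x) (iterN f r y) < δ :=
        hεd r x y (lt_of_lt_of_le (Metric.mem_ball'.mp (Metric.mem_ball.mp hyB)) (hEle r hrm))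
      rw [hiter] at hdist
      simp only [Function.iterate_zero, Function.comp, id] at hdist
      linarith
  refine ⟨y, hyU, q, hq0, ?_⟩
  have hkey : E ≤ dist ((iterN f m)^[q] x) ((iterN f m)^[q] y) := by
    by_contra hc
    push_neg at hc
    have : dist (iterN f r ((iterN f m)^[q] x)) (iterN f r ((iterN f m)^[q] y)) < δ :=
      hεd r _ _ (lt_of_lt_of_le hc (hEle r hrm))
    rw [hiter] at hdist
    simp only [Function.comp] at hdist
    linarith
  linarith
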